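/- Let p, n, k be positive integers with k ≥ 2 and p^k ≤ n. Then there exists a constant K depending only on k such that for every σ ∈ S_p, the unitary Weingarten function satisfies |Wg(n, σ)| ≤ K n^{−p − |σ|(1 − 2/k)}. -/

import Mathlib

/-- `|σ|`: the minimal number of transpositions whose product is `σ`. -/
noncomputable def permLength {p : ℕ} (σ : Equiv.Perm (Fin p)) : ℕ :=
  sInf {k | ∃ l : List (Equiv.Perm (Fin p)),
    l.length = k ∧ (∀ τ ∈ l, τ.IsSwap) ∧ l.prod = σ}

/-- `#σ`: the number of cycles of `σ`, counting fixed points. -/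
def cycleCount {p : ℕ} (σ : Equiv.Perm (Fin p)) : ℕ :=
  σ.cycleType.card + (p - σ.support.card)

namespace WgAux

open Equiv Equiv.Perm Finset

variable {p : ℕ}

lemma support_nonempty_of_ne {ρ : Equiv.Perm (Fin p)} (h : ρ ≠ 1) : ρ.support.Nonempty := by
  rw [Finset.nonempty_iff_ne_empty, Ne, Equiv.Perm.support_eq_empty_iff]; exact h

def bOf (ρ : Equiv.Perm (Fin p)) (h : ρ ≠ 1) : Fin p :=
  ρ.support.max' (support_nonempty_of_ne h)

lemma bOf_mem (ρ : Equiv.Perm (Fin p)) (h : ρ ≠ 1) : bOf ρ h ∈ ρ.support :=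
  Finset.max'_mem _ _

lemma bOf_apply_ne (ρ : Equiv.Perm (Fin p)) (h : ρ ≠ 1) : ρ (bOf ρ h) ≠ bOf ρ h :=
  Equiv.Perm.mem_support.mp (bOf_mem ρ h)

lemma le_bOf {ρ : Equiv.Perm (Fin p)} (h : ρ ≠ 1) {x : Fin p} (hx : x ∈ ρ.support) :
    x ≤ bOf ρ h := Finset.le_max' _ _ hx

lemma aOf_mem (ρ : Equiv.Perm (Fin p)) (h : ρ ≠ 1) : ρ (bOf ρ h) ∈ ρ.support := by
  rw [Equiv.Perm.apply_mem_support]; exact bOf_mem ρ h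

lemma aOf_lt (ρ : Equiv.Perm (Fin p)) (h : ρ ≠ 1) : ρ (bOf ρ h) < bOf ρ h :=
  lt_of_le_of_ne (le_bOf h (aOf_mem ρ h)) (bOf_apply_ne ρ h)

def stepPerm (ρ : Equiv.Perm (Fin p)) (h : ρ ≠ 1) : Equiv.Perm (Fin p) :=
  Equiv.swap (ρ (bOf ρ h)) (bOf ρ h) * ρ

lemma swap_mul_stepPerm (ρ : Equiv.Perm (Fin p)) (h : ρ ≠ 1) :
    Equiv.swap (ρ (bOf ρ h)) (bOf ρ h) * stepPerm ρ h = ρ := by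
  rw [stepPerm, ← mul_assoc, Equiv.swap_mul_self, one_mul]

lemma stepPerm_apply_b (ρ : Equiv.Perm (Fin p)) (h : ρ ≠ 1) :
    stepPerm ρ h (bOf ρ h) = bOf ρ h := by
  simp [stepPerm, Equiv.swap_apply_left]

lemma stepPerm_mem_support {ρ : Equiv.Perm (Fin p)} (h : ρ ≠ 1) {x : Fin p}
    (hx : x ∈ (stepPerm ρ h).support) : x ≠ bOf ρ h ∧ x ∈ ρ.support := by
  rw [Equiv.Perm.mem_support] at hx
  have hxb : x ≠ bOf ρ h := by
    rintro rfl; exact hx (stepPerm_apply_b ρ h)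
  refine ⟨hxb, Equiv.Perm.mem_support.mpr ?_⟩
  intro hfix
  apply hx
  rw [stepPerm, Equiv.Perm.mul_apply, hfix]
  have hxa : x ≠ ρ (bOf ρ h) := by
    rintro rfl
    exact bOf_apply_ne ρ h (Equiv.injective ρ hfix)
  rw [Equiv.swap_apply_of_ne_of_ne hxa hxb]

lemma stepPerm_card_lt (ρ : Equiv.Perm (Fin p)) (h : ρ ≠ 1) :
    (stepPerm ρ h).support.card < ρ.support.card := by
  have hsub : (stepPerm ρ h).support ⊆ ρ.support.erase (bOf ρ h) := fun x hx =>
    Finset.mem_erase.mpr ⟨(stepPerm_mem_support h hx).1, (stepPerm_mem_support h hx).2⟩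
  calc (stepPerm ρ h).support.card ≤ (ρ.support.erase (bOf ρ h)).card :=
        Finset.card_le_card hsub
    _ < ρ.support.card := Finset.card_erase_lt_of_mem (bOf_mem ρ h)

noncomputable def encode (ρ : Equiv.Perm (Fin p)) : Fin p → Fin p :=
  if h : ρ = 1 then id
  else Function.update (encode (stepPerm ρ h)) (bOf ρ h) (ρ (bOf ρ h))
termination_by ρ.support.card
decreasing_by exact stepPerm_card_lt ρ h

lemma encode_one : encode (1 : Equiv.Perm (Fin p)) = id := by rw [encode]; simp

lemma encode_of_ne {ρ : Equiv.Perm (Fin p)} (h : ρ ≠ 1) :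
    encode ρ = Function.update (encode (stepPerm ρ h)) (bOf ρ h) (ρ (bOf ρ h)) := by
  rw [encode]; simp [h]

lemma encode_le (ρ : Equiv.Perm (Fin p)) (b' : Fin p) : encode ρ b' ≤ b' := by
  by_cases h : ρ = 1
  · subst h; rw [encode_one]; exact le_rfl
  · rw [encode_of_ne h]
    rcases eq_or_ne b' (bOf ρ h) with rfl | hne
    · rw [Function.update_self]; exact (aOf_lt ρ h).le
    · rw [Function.update_of_ne hne]; exact encode_le (stepPerm ρ h) b'
termination_by ρ.support.card
decreasing_by exact stepPerm_card_lt ρ h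

lemma mem_support_of_encode_ne {ρ : Equiv.Perm (Fin p)} {b' : Fin p}
    (hne : encode ρ b' ≠ b') : b' ∈ ρ.support := by
  by_cases h : ρ = 1
  · subst h; rw [encode_one] at hne; exact absurd rfl hne
  · rw [encode_of_ne h] at hne
    rcases eq_or_ne b' (bOf ρ h) with rfl | hb
    · exact bOf_mem ρ h
    · rw [Function.update_of_ne hb] at hne
      exact (stepPerm_mem_support h (mem_support_of_encode_ne hne)).2
termination_by ρ.support.card
decreasing_by exact stepPerm_card_lt ρ h

lemma encode_stepPerm {ρ : Equiv.Perm (Fin p)} (h : ρ ≠ 1) :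
    encode (stepPerm ρ h) = Function.update (encode ρ) (bOf ρ h) (bOf ρ h) := by
  funext b'
  rcases eq_or_ne b' (bOf ρ h) with rfl | hb
  · rw [Function.update_self]
    by_contra hne
    have := (stepPerm_mem_support h (mem_support_of_encode_ne hne)).1
    exact this rfl
  · rw [Function.update_of_ne hb, encode_of_ne h, Function.update_of_ne hb]

/-- number of non-fixed points of the encoding; equals the canonical number of
transpositions. -/
noncomputable def Dlen (ρ : Equiv.Perm (Fin p)) : ℕ :=
  (Finset.univ.filter fun b' => encode ρ b' ≠ b').card

lemma Dlen_one : Dlen (1 : Equiv.Perm (Fin p)) = 0 := by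
  simp [Dlen, encode_one]

lemma encode_bOf {ρ : Equiv.Perm (Fin p)} (h : ρ ≠ 1) :
    encode ρ (bOf ρ h) = ρ (bOf ρ h) := by
  rw [encode_of_ne h, Function.update_self]

lemma filter_encode_eq {ρ : Equiv.Perm (Fin p)} (h : ρ ≠ 1) :
    (Finset.univ.filter fun b' => encode ρ b' ≠ b') =
      insert (bOf ρ h) (Finset.univ.filter fun b' => encode (stepPerm ρ h) b' ≠ b') := by
  ext x
  rcases eq_or_ne x (bOf ρ h) with rfl | hx
  · simp only [Finset.mem_insert, Finset.mem_filter, Finset.mem_univ, true_and]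
    exact ⟨fun _ => by simp, fun _ => by rw [encode_bOf h]; exact bOf_apply_ne ρ h⟩
  · simp only [Finset.mem_insert, Finset.mem_filter, Finset.mem_univ, true_and]
    rw [encode_stepPerm h, Function.update_of_ne hx, encode_of_ne h, Function.update_of_ne hx]
    rw [encode_stepPerm h, Function.update_of_ne hx]
    exact ⟨fun h' => Or.inr h', fun h' => h'.resolve_left hx⟩
lemma Dlen_step {ρ : Equiv.Perm (Fin p)} (h : ρ ≠ 1) :
    Dlen ρ = Dlen (stepPerm ρ h) + 1 := by
  rw [Dlen, filter_encode_eq h, Finset.card_insert_of_notMem, Dlen]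
  simp only [Finset.mem_filter, Finset.mem_univ, true_and, not_not]
  rw [encode_stepPerm h, Function.update_self]

lemma bOf_eq_max' {ρ : Equiv.Perm (Fin p)} (h : ρ ≠ 1)
    (hne : (Finset.univ.filter fun b' => encode ρ b' ≠ b').Nonempty) :
    (Finset.univ.filter fun b' => encode ρ b' ≠ b').max' hne = bOf ρ h := by
  apply le_antisymm
  · apply Finset.max'_le
    intro y hy
    rw [Finset.mem_filter] at hy
    exact le_bOf h (mem_support_of_encode_ne hy.2)
  · apply Finset.le_max'
    rw [Finset.mem_filter]
    exact ⟨Finset.mem_univ _, by rw [encode_bOf h]; exact bOf_apply_ne ρ h⟩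

lemma encode_inj_aux (ρ₁ ρ₂ : Equiv.Perm (Fin p)) (heq : encode ρ₁ = encode ρ₂) : ρ₁ = ρ₂ := by
  by_cases h1 : ρ₁ = 1
  · subst h1
    by_contra h2
    have h2' : ρ₂ ≠ 1 := fun hh => h2 hh.symm
    have := encode_bOf h2'
    rw [← heq, encode_one] at this
    exact bOf_apply_ne ρ₂ h2' this.symm
  · by_cases h2 : ρ₂ = 1
    · subst h2
      have := encode_bOf h1
      rw [heq, encode_one] at this
      exact absurd this.symm (bOf_apply_ne ρ₁ h1)
    · have hne : (Finset.univ.filter fun b' => encode ρ₁ b' ≠ b').Nonempty := by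
        refine ⟨bOf ρ₁ h1, ?_⟩
        rw [Finset.mem_filter]
        exact ⟨Finset.mem_univ _, by rw [encode_bOf h1]; exact bOf_apply_ne ρ₁ h1⟩
      have hne2 : (Finset.univ.filter fun b' => encode ρ₂ b' ≠ b').Nonempty := by
        rwa [← heq]
      have hb : bOf ρ₁ h1 = bOf ρ₂ h2 := by
        rw [← bOf_eq_max' h1 hne, ← bOf_eq_max' h2 hne2]
        congr 1
        rw [heq]
      have ha : ρ₁ (bOf ρ₁ h1) = ρ₂ (bOf ρ₂ h2) := by
        rw [← encode_bOf h1, ← encode_bOf h2, heq, hb]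
      have hstep : encode (stepPerm ρ₁ h1) = encode (stepPerm ρ₂ h2) := by
        rw [encode_stepPerm h1, encode_stepPerm h2, heq, hb]
      have hrec := encode_inj_aux _ _ hstep
      have e1 := swap_mul_stepPerm ρ₁ h1
      rw [hrec, ha, hb, swap_mul_stepPerm ρ₂ h2] at e1
      exact e1.symm
termination_by ρ₁.support.card
decreasing_by exact stepPerm_card_lt ρ₁ h1

lemma encode_injective : Function.Injective (encode : Equiv.Perm (Fin p) → Fin p → Fin p) :=
  fun _ _ h => encode_inj_aux _ _ h

lemma exists_swap_list (ρ : Equiv.Perm (Fin p)) :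
    ∃ l : List (Equiv.Perm (Fin p)), l.length = Dlen ρ ∧ (∀ τ ∈ l, τ.IsSwap) ∧ l.prod = ρ := by
  by_cases h : ρ = 1
  · subst h; exact ⟨[], by simp [Dlen_one], by simp, rfl⟩
  · obtain ⟨l', hl', hsw, hprod⟩ := exists_swap_list (stepPerm ρ h)
    refine ⟨Equiv.swap (ρ (bOf ρ h)) (bOf ρ h) :: l', ?_, ?_, ?_⟩
    · simp [hl', Dlen_step h]
    · intro τ hτ
      rcases List.mem_cons.mp hτ with rfl | hτ'
      · exact ⟨_, _, (aOf_lt ρ h).ne, rfl⟩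
      · exact hsw τ hτ'

    · rw [List.prod_cons, hprod, swap_mul_stepPerm]
termination_by ρ.support.card
decreasing_by exact stepPerm_card_lt ρ h

lemma permLength_nonempty (σ : Equiv.Perm (Fin p)) :
    {k | ∃ l : List (Equiv.Perm (Fin p)),
      l.length = k ∧ (∀ τ ∈ l, τ.IsSwap) ∧ l.prod = σ}.Nonempty := by
  obtain ⟨l, h1, h2, h3⟩ := exists_swap_list σ
  exact ⟨Dlen σ, l, h1, h2, h3⟩

lemma permLength_le_Dlen (σ : Equiv.Perm (Fin p)) : permLength σ ≤ Dlen σ := by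
  obtain ⟨l, h1, h2, h3⟩ := exists_swap_list σ
  exact Nat.sInf_le ⟨l, h1, h2, h3⟩

lemma permLength_one : permLength (1 : Equiv.Perm (Fin p)) = 0 :=
  Nat.le_zero.mp (Nat.sInf_le ⟨[], rfl, by simp, rfl⟩)

lemma permLength_mul_inv_le (τ ρ : Equiv.Perm (Fin p)) :
    permLength (τ * ρ⁻¹) ≤ permLength τ + Dlen ρ := by
  obtain ⟨lτ, h1, h2, h3⟩ := Nat.sInf_mem (permLength_nonempty τ)
  obtain ⟨lρ, g1, g2, g3⟩ := exists_swap_list ρ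
  apply Nat.sInf_le
  refine ⟨lτ ++ (lρ.map fun x => x⁻¹).reverse, ?_, ?_, ?_⟩
  · rw [List.length_append, h1, List.length_reverse, List.length_map, g1]; rfl
  · intro x hx
    rcases List.mem_append.mp hx with hx | hx
    · exact h2 x hx
    · rw [List.mem_reverse, List.mem_map] at hx
      obtain ⟨y, hy, rfl⟩ := hx
      obtain ⟨u, v, huv, rfl⟩ := g2 y hy
      exact ⟨u, v, huv, by rw [Equiv.swap_inv]⟩
  · rw [List.prod_append, h3, ← List.prod_inv_reverse, g3]

/-! ### Cycle counting via orbits -/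

def scSetoid (σ : Equiv.Perm (Fin p)) : Setoid (Fin p) :=
  ⟨σ.SameCycle, ⟨Equiv.Perm.SameCycle.refl σ, fun h => h.symm, fun h h' => h.trans h'⟩⟩

noncomputable def ncyc (σ : Equiv.Perm (Fin p)) : ℕ := Nat.card (Quotient (scSetoid σ))

lemma ncyc_one : ncyc (1 : Equiv.Perm (Fin p)) = p := by
  have hbij : Function.Bijective (fun x => (Quotient.mk'' x : Quotient (scSetoid (1 : Equiv.Perm (Fin p))))) := by
    constructor
    · intro x y hxy
      exact Equiv.Perm.sameCycle_one.mp (Quotient.exact' hxy)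
    · intro q
      exact Quotient.inductionOn' q fun x => ⟨x, rfl⟩
  rw [ncyc, ← Nat.card_eq_of_bijective _ hbij, Nat.card_eq_fintype_card, Fintype.card_fin]

lemma card_add_one_le {α β : Type*} [Finite α] (f : α → β) (hf : Function.Surjective f)
    {x y : α} (hxy : x ≠ y) (hfxy : f x = f y) : Nat.card β + 1 ≤ Nat.card α := by
  classical
  have hfin : Finite β := Finite.of_surjective f hf
  have hG : Function.Surjective
      (fun a => if a = x then Sum.inr () else Sum.inl (f a) : α → β ⊕ Unit) := by
    rintro (z | u)
    · obtain ⟨w, rfl⟩ := hf z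
      by_cases hw : w = x
      · subst hw
        refine ⟨y, ?_⟩
        simp only [if_neg (Ne.symm hxy), hfxy]
      · exact ⟨w, by simp only [if_neg hw]⟩
    · exact ⟨x, by simp⟩
  have hle := Nat.card_le_card_of_surjective _ hG
  have hu : Nat.card Unit = 1 := Nat.card_unique
  rw [Nat.card_sum, hu] at hle
  exact hle

lemma sameCycle_step {ρ : Equiv.Perm (Fin p)} (h : ρ ≠ 1) {x y : Fin p} :
    (stepPerm ρ h).SameCycle x y → ρ.SameCycle x y := by
  have hab : ρ.SameCycle (bOf ρ h) (ρ (bOf ρ h)) := ⟨1, by simp⟩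
  have key : ∀ z, ρ.SameCycle z (stepPerm ρ h z) := by
    intro z
    have hz : ρ.SameCycle z (ρ z) := ⟨1, by simp⟩
    show ρ.SameCycle z (Equiv.swap (ρ (bOf ρ h)) (bOf ρ h) (ρ z))
    rcases eq_or_ne (ρ z) (ρ (bOf ρ h)) with hza | hza
    · rw [hza, Equiv.swap_apply_left]
      rw [hza] at hz
      exact hz.trans hab.symm
    · rcases eq_or_ne (ρ z) (bOf ρ h) with hzb | hzb
      · rw [hzb, Equiv.swap_apply_right]
        rw [hzb] at hz
        exact hz.trans hab
      · rw [Equiv.swap_apply_of_ne_of_ne hza hzb]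
        exact hz
  have claim : ∀ (i : ℕ) (z : Fin p), ρ.SameCycle z ((stepPerm ρ h ^ i) z) := by
    intro i
    induction i with
    | zero => intro z; simpa using Equiv.Perm.SameCycle.refl ρ z
    | succ m IH =>
      intro z
      rw [pow_succ, Equiv.Perm.mul_apply]
      exact (key z).trans (IH (stepPerm ρ h z))
  intro hxy
  obtain ⟨i, _, hi⟩ := hxy.exists_pow_eq'
  rw [← hi]
  exact claim i x

lemma not_sameCycle_step {ρ : Equiv.Perm (Fin p)} (h : ρ ≠ 1) :
    ¬ (stepPerm ρ h).SameCycle (ρ (bOf ρ h)) (bOf ρ h) := by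
  intro hc
  exact (aOf_lt ρ h).ne (hc.eq_of_right (stepPerm_apply_b ρ h))

lemma ncyc_step {ρ : Equiv.Perm (Fin p)} (h : ρ ≠ 1) :
    ncyc ρ + 1 ≤ ncyc (stepPerm ρ h) := by
  let F : Quotient (scSetoid (stepPerm ρ h)) → Quotient (scSetoid ρ) :=
    Quotient.map' id fun a b hab => sameCycle_step h hab
  have hsurj : Function.Surjective F := by
    intro q
    exact Quotient.inductionOn' q fun z => ⟨Quotient.mk'' z, rfl⟩
  have hne : (Quotient.mk'' (ρ (bOf ρ h)) : Quotient (scSetoid (stepPerm ρ h))) ≠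
      Quotient.mk'' (bOf ρ h) := by
    intro he
    exact not_sameCycle_step h (Quotient.exact' he)
  have heq : F (Quotient.mk'' (ρ (bOf ρ h))) = F (Quotient.mk'' (bOf ρ h)) := by
    show Quotient.map' _ _ _ = Quotient.map' _ _ _
    show (Quotient.mk'' (ρ (bOf ρ h)) : Quotient (scSetoid ρ)) = Quotient.mk'' (bOf ρ h)
    have hsc : ρ.SameCycle (bOf ρ h) (ρ (bOf ρ h)) := ⟨1, by simp⟩
    exact Quotient.sound' hsc.symm
  exact card_add_one_le F hsurj hne heq

lemma ncyc_add_Dlen_le (ρ : Equiv.Perm (Fin p)) : ncyc ρ + Dlen ρ ≤ p := by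
  by_cases h : ρ = 1
  · subst h; rw [ncyc_one, Dlen_one]; simp
  · rw [Dlen_step h]
    have h1 := ncyc_step h
    have h2 := ncyc_add_Dlen_le (stepPerm ρ h)
    omega
termination_by ρ.support.card
decreasing_by exact stepPerm_card_lt ρ h

lemma cycleCount_le_ncyc (σ : Equiv.Perm (Fin p)) : cycleCount σ ≤ ncyc σ := by
  classical
  have hpt : ∀ c : σ.cycleFactorsFinset, (c : Equiv.Perm (Fin p)).support.Nonempty := fun c =>
    support_nonempty_of_ne (Equiv.Perm.mem_cycleFactorsFinset_iff.mp c.2).1.ne_one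
  set pt : σ.cycleFactorsFinset → Fin p := fun c => (c : Equiv.Perm (Fin p)).support.min' (hpt c)
    with hptdef
  have hptmem : ∀ c : σ.cycleFactorsFinset, pt c ∈ (c : Equiv.Perm (Fin p)).support := fun c => Finset.min'_mem _ _
  have hptc : ∀ c : σ.cycleFactorsFinset, (c : Equiv.Perm (Fin p)) = σ.cycleOf (pt c) :=
    fun c => Equiv.Perm.cycle_is_cycleOf (hptmem c) c.2
  have hptne : ∀ c : σ.cycleFactorsFinset, σ (pt c) ≠ pt c := by
    intro c
    have h1 : (c : Equiv.Perm (Fin p)) (pt c) ≠ pt c := Equiv.Perm.mem_support.mp (hptmem c)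
    have h2 : (c : Equiv.Perm (Fin p)) (pt c) = σ (pt c) :=
      (Equiv.Perm.mem_cycleFactorsFinset_iff.mp c.2).2 _ (hptmem c)
    rw [← h2]; exact h1
  set F : σ.cycleFactorsFinset ⊕ {x : Fin p // σ x = x} → Quotient (scSetoid σ) :=
    Sum.elim (fun c => Quotient.mk'' (pt c)) (fun x => Quotient.mk'' x.1) with hFdef
  have hinj : Function.Injective F := by
    rintro (c | x) (d | y) huv
    · have hsc : σ.SameCycle (pt c) (pt d) := Quotient.exact' huv
      have hcd : (c : Equiv.Perm (Fin p)) = d := by rw [hptc c, hptc d, hsc.cycleOf_eq]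
      exact congrArg Sum.inl (Subtype.ext hcd)
    · exfalso
      have hsc : σ.SameCycle (pt c) y.1 := Quotient.exact' huv
      have he : pt c = y.1 := hsc.eq_of_right y.2
      exact hptne c (by rw [he]; exact y.2)
    · exfalso
      have hsc : σ.SameCycle x.1 (pt d) := Quotient.exact' huv
      have he : x.1 = pt d := hsc.eq_of_left x.2
      exact hptne d (by rw [← he]; exact x.2)
    · have hsc : σ.SameCycle x.1 y.1 := Quotient.exact' huv
      exact congrArg Sum.inr (Subtype.ext (hsc.eq_of_right y.2))
  have hcard := Nat.card_le_card_of_injective F hinj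
  have h1 : Nat.card ↥σ.cycleFactorsFinset = σ.cycleType.card := by
    rw [Nat.card_eq_fintype_card, Fintype.card_coe, Equiv.Perm.cycleType_def,
      Multiset.card_map]
    rfl
  have h2 : Nat.card {x : Fin p // σ x = x} = p - σ.support.card := by
    rw [Nat.card_eq_fintype_card, Fintype.card_subtype]
    have hset : (Finset.univ.filter fun x => σ x = x) = σ.supportᶜ := by
      ext z
      simp [Equiv.Perm.mem_support, not_not]
    rw [hset, Finset.card_compl, Fintype.card_fin]
  rw [Nat.card_sum, h1, h2] at hcard
  exact hcard

lemma cycleCount_add_Dlen_le (ρ : Equiv.Perm (Fin p)) : cycleCount ρ + Dlen ρ ≤ p :=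
  le_trans (Nat.add_le_add_right (cycleCount_le_ncyc ρ) _) (ncyc_add_Dlen_le ρ)

lemma cycleCount_one : cycleCount (1 : Equiv.Perm (Fin p)) = p := by
  simp [cycleCount, Equiv.Perm.cycleType_one, Equiv.Perm.support_one]

/-! ### The combinatorial sum bound -/

lemma exp_half_le : Real.exp (1/2) ≤ 5/3 := by
  have h1 := Real.exp_one_lt_d9
  have h2 : Real.exp (1/2) * Real.exp (1/2) = Real.exp 1 := by
    rw [← Real.exp_add]; norm_num
  nlinarith [Real.exp_pos (1/2)]

lemma sum_pow_Dlen_le (x : ℝ) (hx0 : 0 ≤ x) (hx : x * (p:ℝ)^2 ≤ 1) :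
    ∑ ρ ∈ Finset.univ.erase (1 : Equiv.Perm (Fin p)), x ^ Dlen ρ ≤ 2/3 := by
  classical
  set W : (Fin p → Fin p) → ℝ := fun f => ∏ b : Fin p, (if f b ≠ b then x else 1) with hWdef
  have hWnn : ∀ f, 0 ≤ W f := by
    intro f
    apply Finset.prod_nonneg
    intro b _
    split <;> simp [hx0]
  have hWpow : ∀ f : Fin p → Fin p, W f = x ^ (Finset.univ.filter fun b => f b ≠ b).card := by
    intro f
    have hWf : W f = ∏ b : Fin p, (if f b ≠ b then x else 1) := rfl
    rw [hWf, Finset.prod_ite, Finset.prod_const, Finset.prod_const, one_pow, mul_one]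
  have hWid : W id = 1 := by
    rw [hWpow]
    simp
  set T : Finset (Fin p → Fin p) := Fintype.piFinset fun b : Fin p => Finset.Iic b with hTdef
  have hidT : id ∈ T := by
    rw [hTdef, Fintype.mem_piFinset]
    intro b
    exact Finset.mem_Iic.mpr le_rfl
  -- step 1 : rewrite the sum via the encoding
  have step1 : ∑ ρ ∈ Finset.univ.erase (1 : Equiv.Perm (Fin p)), x ^ Dlen ρ =
      ∑ f ∈ (Finset.univ.erase (1 : Equiv.Perm (Fin p))).image encode, W f := by
    rw [Finset.sum_image (fun a _ b _ h => encode_injective h)]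
    apply Finset.sum_congr rfl
    intro ρ _
    rw [hWpow]
    rfl
  -- step 2 : the image is inside T.erase id
  have step2 : (Finset.univ.erase (1 : Equiv.Perm (Fin p))).image encode ⊆ T.erase id := by
    intro f hf
    rw [Finset.mem_image] at hf
    obtain ⟨ρ, hρ, rfl⟩ := hf
    rw [Finset.mem_erase] at hρ ⊢
    constructor
    · intro hid
      apply hρ.1
      apply encode_injective
      rw [hid, encode_one]
    · rw [hTdef, Fintype.mem_piFinset]
      intro b
      exact Finset.mem_Iic.mpr (encode_le ρ b)
  -- step 3 : sum over T
  have step3 : ∑ f ∈ T.erase id, W f = (∑ f ∈ T, W f) - 1 := by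
    rw [← Finset.add_sum_erase T W hidT, hWid]
    ring
  -- step 4 : product formula
  have step4 : ∑ f ∈ T, W f = ∏ b : Fin p, (1 + (b : ℝ) * x) := by
    have hW' : ∑ f ∈ T, W f = ∑ f ∈ T, ∏ b : Fin p, (if f b ≠ b then x else 1) :=
      Finset.sum_congr rfl (fun f _ => rfl)
    have hps := Finset.prod_univ_sum (fun b : Fin p => Finset.Iic b)
      (fun b a => if a ≠ b then x else 1)
    rw [hW', hTdef, ← hps]
    apply Finset.prod_congr rfl
    intro b _
    rw [← Finset.Iio_insert b, Finset.sum_insert (Finset.notMem_Iio_self)]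
    rw [if_neg (by simp)]
    have : ∑ a ∈ Finset.Iio b, (if a ≠ b then x else 1) = ∑ a ∈ Finset.Iio b, x := by
      apply Finset.sum_congr rfl
      intro a ha
      rw [if_pos (ne_of_lt (Finset.mem_Iio.mp ha))]
    rw [this, Finset.sum_const, Fin.card_Iio]
    push_cast
    ring
  -- step 5 : bound the product
  have step5 : ∏ b : Fin p, (1 + (b : ℝ) * x) ≤ Real.exp (1/2) := by
    have hle : ∏ b : Fin p, (1 + (b : ℝ) * x) ≤ ∏ b : Fin p, Real.exp ((b : ℝ) * x) := by
      apply Finset.prod_le_prod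
      · intro b _
        positivity
      · intro b _
        have := Real.add_one_le_exp ((b : ℝ) * x)
        linarith
    rw [← Real.exp_sum] at hle
    refine hle.trans (Real.exp_le_exp.mpr ?_)
    have hgauss : (∑ i ∈ Finset.range p, i) * 2 = p * (p - 1) := Finset.sum_range_id_mul_two p
    have hsum : ∑ b : Fin p, (b : ℝ) * x = (∑ i ∈ Finset.range p, (i:ℕ)) * x := by
      rw [← Finset.sum_mul]
      congr 1
      rw [Nat.cast_sum]
      exact Fin.sum_univ_eq_sum_range (fun i => (i : ℝ)) p
    rw [hsum]
    have h2 : ((∑ i ∈ Finset.range p, i : ℕ) : ℝ) * 2 ≤ (p:ℝ)^2 := by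
      have : (∑ i ∈ Finset.range p, i) * 2 ≤ p * p := by
        rw [hgauss]
        exact Nat.mul_le_mul_left p (Nat.sub_le p 1)
      calc ((∑ i ∈ Finset.range p, i : ℕ) : ℝ) * 2 = (((∑ i ∈ Finset.range p, i) * 2 : ℕ) : ℝ) := by
            push_cast; ring
        _ ≤ ((p * p : ℕ) : ℝ) := Nat.cast_le.mpr this
        _ = (p:ℝ)^2 := by push_cast; ring
    nlinarith [hx0, hx]
  -- combine
  calc ∑ ρ ∈ Finset.univ.erase (1 : Equiv.Perm (Fin p)), x ^ Dlen ρ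
      = ∑ f ∈ (Finset.univ.erase (1 : Equiv.Perm (Fin p))).image encode, W f := step1
    _ ≤ ∑ f ∈ T.erase id, W f :=
        Finset.sum_le_sum_of_subset_of_nonneg step2 (fun f _ _ => hWnn f)
    _ = (∑ f ∈ T, W f) - 1 := step3
    _ = (∏ b : Fin p, (1 + (b : ℝ) * x)) - 1 := by rw [step4]
    _ ≤ Real.exp (1/2) - 1 := by linarith [step5]
    _ ≤ 2/3 := by linarith [exp_half_le]

end WgAux

theorem weingarten_bound_aux (k : ℕ) (hk : 2 ≤ k) (p n : ℕ) (hp : 0 < p) (hpk : p ^ k ≤ n)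
    (Wg : Equiv.Perm (Fin p) → ℝ)
    (hWg : ∀ σ : Equiv.Perm (Fin p),
      ∑ τ : Equiv.Perm (Fin p), (n : ℝ) ^ cycleCount (σ⁻¹ * τ) * Wg τ =
        if σ = 1 then 1 else 0)
    (σ : Equiv.Perm (Fin p)) :
    |Wg σ| ≤ 3 * (n : ℝ) ^ (-(p : ℝ) - (permLength σ : ℝ) * (1 - 2 / (k : ℝ))) := by
  classical
  open WgAux in
  obtain ⟨α, hα⟩ : ∃ a : ℝ, a = 1 - 2 / (k : ℝ) := ⟨_, rfl⟩
  have hk2 : (2:ℝ) ≤ (k:ℝ) := by exact_mod_cast hk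
  have hk0 : (0:ℝ) < (k:ℝ) := by linarith
  have hα0 : 0 ≤ α := by
    have : 2 / (k:ℝ) ≤ 1 := by rw [div_le_one hk0]; linarith
    rw [hα]; linarith
  have hnn : 1 ≤ n := le_trans (Nat.one_le_pow k p hp) hpk
  have hn1 : (1:ℝ) ≤ (n:ℝ) := by exact_mod_cast hnn
  have hn0 : (0:ℝ) < (n:ℝ) := lt_of_lt_of_le zero_lt_one hn1
  set x : ℝ := (n:ℝ) ^ (-(2 / (k:ℝ))) with hxdef
  have hx0 : 0 ≤ x := Real.rpow_nonneg hn0.le _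
  have hxp : x * (p:ℝ)^2 ≤ 1 := by
    have hpk' : ((p:ℝ))^(k:ℕ) ≤ (n:ℝ) := by exact_mod_cast hpk
    have h2k : (0:ℝ) ≤ 2/(k:ℝ) := by positivity
    have h1 : (((p:ℝ))^(k:ℕ)) ^ ((2:ℝ)/k) ≤ (n:ℝ) ^ ((2:ℝ)/k) :=
      Real.rpow_le_rpow (by positivity) hpk' h2k
    have h2 : (((p:ℝ))^(k:ℕ)) ^ ((2:ℝ)/k) = (p:ℝ)^2 := by
      rw [← Real.rpow_natCast (p:ℝ) k, ← Real.rpow_mul (by positivity)]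
      rw [show (k:ℝ) * (2/(k:ℝ)) = 2 by field_simp]
      rw [show (2:ℝ) = ((2:ℕ):ℝ) by norm_num, Real.rpow_natCast]
    calc x * (p:ℝ)^2 ≤ x * (n:ℝ)^((2:ℝ)/k) := by
          apply mul_le_mul_of_nonneg_left _ hx0
          rw [← h2]; exact h1
      _ = (n:ℝ) ^ (-(2/(k:ℝ)) + 2/(k:ℝ)) := by rw [hxdef, ← Real.rpow_add hn0]
      _ = 1 := by rw [neg_add_cancel, Real.rpow_zero]
  have hne : (Finset.univ : Finset (Equiv.Perm (Fin p))).Nonempty := ⟨1, Finset.mem_univ 1⟩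
  set B : Equiv.Perm (Fin p) → ℝ :=
    fun τ => |Wg τ| * (n:ℝ) ^ ((p:ℝ) + α * (permLength τ : ℝ)) with hB
  set M := Finset.univ.sup' hne B with hMdef
  have hBM : ∀ τ, B τ ≤ M := fun τ => Finset.le_sup' B (Finset.mem_univ τ)
  obtain ⟨σ0, -, hMeq0⟩ := Finset.exists_mem_eq_sup' hne B
  have hMeq : M = B σ0 := by rw [hMdef, hMeq0]
  have hBnn : ∀ τ, 0 ≤ B τ := fun τ => mul_nonneg (abs_nonneg _) (Real.rpow_nonneg hn0.le _)
  have hM0 : 0 ≤ M := by rw [hMeq]; exact hBnn σ0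
  have hWgle : ∀ τ, |Wg τ| ≤ M * (n:ℝ) ^ (-((p:ℝ) + α * (permLength τ : ℝ))) := by
    intro τ
    have hpos := Real.rpow_pos_of_pos hn0 ((p:ℝ) + α * (permLength τ : ℝ))
    rw [Real.rpow_neg hn0.le, ← div_eq_mul_inv, le_div_iff₀ hpos]
    exact hBM τ
  have hM3 : M ≤ 3 := by
    -- per-term bound
    have hterm : ∀ τ : Equiv.Perm (Fin p),
        (n:ℝ)^(cycleCount (σ0⁻¹ * τ)) * |Wg τ| ≤
          (M * (n:ℝ)^(-(α * (permLength σ0 : ℝ)))) * x ^ (Dlen (σ0⁻¹ * τ)) := by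
      intro τ
      set ρ := σ0⁻¹ * τ with hρ
      have hC : (cycleCount ρ : ℝ) + (Dlen ρ : ℝ) ≤ (p:ℝ) := by
        exact_mod_cast cycleCount_add_Dlen_le ρ
      have hL : (permLength σ0 : ℝ) ≤ (permLength τ : ℝ) + (Dlen ρ : ℝ) := by
        have h1 : τ * ρ⁻¹ = σ0 := by rw [hρ]; group
        have := permLength_mul_inv_le τ ρ
        rw [h1] at this
        exact_mod_cast this
      have hprod : α * (permLength σ0 : ℝ) ≤
          α * (permLength τ : ℝ) + α * (Dlen ρ : ℝ) := by
        have := mul_le_mul_of_nonneg_left hL hα0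
        rw [mul_add] at this
        exact this
      have hc2 : (-(2/(k:ℝ))) * (Dlen ρ : ℝ) = -(Dlen ρ : ℝ) + α * (Dlen ρ : ℝ) := by
        rw [hα]; ring
      have hexp : (cycleCount ρ : ℝ) - ((p:ℝ) + α * (permLength τ : ℝ)) ≤
          -(α * (permLength σ0 : ℝ)) + (-(2/(k:ℝ))) * (Dlen ρ : ℝ) := by
        linarith [hC, hprod, hc2]
      calc (n:ℝ)^(cycleCount ρ) * |Wg τ|
          ≤ (n:ℝ)^(cycleCount ρ) * (M * (n:ℝ) ^ (-((p:ℝ) + α * (permLength τ : ℝ)))) :=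
            mul_le_mul_of_nonneg_left (hWgle τ) (pow_nonneg hn0.le _)
        _ = M * ((n:ℝ)^((cycleCount ρ : ℕ):ℝ) * (n:ℝ) ^ (-((p:ℝ) + α * (permLength τ : ℝ)))) := by
            rw [Real.rpow_natCast]; ring
        _ = M * (n:ℝ)^((cycleCount ρ : ℝ) - ((p:ℝ) + α * (permLength τ : ℝ))) := by
            rw [← Real.rpow_add hn0]; ring_nf
        _ ≤ M * (n:ℝ)^(-(α * (permLength σ0 : ℝ)) + (-(2/(k:ℝ))) * (Dlen ρ : ℝ)) :=
            mul_le_mul_of_nonneg_left (Real.rpow_le_rpow_of_exponent_le hn1 hexp) hM0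
        _ = (M * (n:ℝ)^(-(α * (permLength σ0 : ℝ)))) * x ^ (Dlen ρ) := by
            rw [Real.rpow_add hn0, hxdef, ← Real.rpow_natCast ((n:ℝ) ^ (-(2/(k:ℝ)))) (Dlen ρ),
              ← Real.rpow_mul hn0.le]
            ring
    -- reindex
    have hre : ∑ τ ∈ Finset.univ.erase σ0, x ^ Dlen (σ0⁻¹ * τ) =
        ∑ ρ ∈ Finset.univ.erase (1 : Equiv.Perm (Fin p)), x ^ Dlen ρ := by
      apply Finset.sum_nbij' (i := fun τ => σ0⁻¹ * τ) (j := fun ρ => σ0 * ρ)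
      · intro a ha
        rw [Finset.mem_erase] at ha ⊢
        refine ⟨?_, Finset.mem_univ _⟩
        intro h1
        apply ha.1
        have := congrArg (fun z => σ0 * z) h1
        simpa [mul_assoc] using this
      · intro a ha
        rw [Finset.mem_erase] at ha ⊢
        refine ⟨?_, Finset.mem_univ _⟩
        intro h1
        apply ha.1
        have := congrArg (fun z => σ0⁻¹ * z) h1
        simpa [mul_assoc] using this
      · intro a _; simp [mul_assoc]
      · intro a _; simp [mul_assoc]
      · intro a _; rfl
    have hsum : |∑ τ ∈ Finset.univ.erase σ0, (n:ℝ)^(cycleCount (σ0⁻¹ * τ)) * Wg τ| ≤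
        (2/3) * (M * (n:ℝ)^(-(α * (permLength σ0 : ℝ)))) := by
      have hMY : 0 ≤ M * (n:ℝ)^(-(α * (permLength σ0 : ℝ))) :=
        mul_nonneg hM0 (Real.rpow_nonneg hn0.le _)
      calc |∑ τ ∈ Finset.univ.erase σ0, (n:ℝ)^(cycleCount (σ0⁻¹ * τ)) * Wg τ|
          ≤ ∑ τ ∈ Finset.univ.erase σ0, |(n:ℝ)^(cycleCount (σ0⁻¹ * τ)) * Wg τ| :=
            Finset.abs_sum_le_sum_abs _ _
        _ ≤ ∑ τ ∈ Finset.univ.erase σ0,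
              (M * (n:ℝ)^(-(α * (permLength σ0 : ℝ)))) * x ^ (Dlen (σ0⁻¹ * τ)) := by
            apply Finset.sum_le_sum
            intro τ _
            rw [abs_mul, abs_of_nonneg (pow_nonneg hn0.le _)]
            exact hterm τ
        _ = (M * (n:ℝ)^(-(α * (permLength σ0 : ℝ)))) *
              ∑ τ ∈ Finset.univ.erase σ0, x ^ (Dlen (σ0⁻¹ * τ)) := by
            rw [Finset.mul_sum]
        _ ≤ (M * (n:ℝ)^(-(α * (permLength σ0 : ℝ)))) * (2/3) := by
            apply mul_le_mul_of_nonneg_left _ hMY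
            rw [hre]
            exact sum_pow_Dlen_le x hx0 hxp
        _ = (2/3) * (M * (n:ℝ)^(-(α * (permLength σ0 : ℝ)))) := by ring
    -- the equation at σ0
    have heq := hWg σ0
    rw [← Finset.add_sum_erase _ _ (Finset.mem_univ σ0)] at heq
    rw [inv_mul_cancel, cycleCount_one] at heq
    have habs : (n:ℝ)^(p:ℕ) * |Wg σ0| ≤ (if σ0 = 1 then (1:ℝ) else 0) +
        (2/3) * (M * (n:ℝ)^(-(α * (permLength σ0 : ℝ)))) := by
      have hA : (n:ℝ)^(p:ℕ) * Wg σ0 = (if σ0 = 1 then (1:ℝ) else 0) -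
          ∑ τ ∈ Finset.univ.erase σ0, (n:ℝ)^(cycleCount (σ0⁻¹ * τ)) * Wg τ := by
        linarith [heq]
      calc (n:ℝ)^(p:ℕ) * |Wg σ0| = |(n:ℝ)^(p:ℕ) * Wg σ0| := by
            rw [abs_mul, abs_of_nonneg (pow_nonneg hn0.le _)]
        _ ≤ |if σ0 = 1 then (1:ℝ) else 0| +
            |∑ τ ∈ Finset.univ.erase σ0, (n:ℝ)^(cycleCount (σ0⁻¹ * τ)) * Wg τ| := by
            rw [hA]; exact abs_sub _ _
        _ ≤ (if σ0 = 1 then (1:ℝ) else 0) +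
            (2/3) * (M * (n:ℝ)^(-(α * (permLength σ0 : ℝ)))) := by
            apply add_le_add _ hsum
            split <;> simp
    -- multiply through by n^(α L σ0)
    set Y : ℝ := (n:ℝ)^(α * (permLength σ0 : ℝ)) with hY
    have hYpos : 0 < Y := Real.rpow_pos_of_pos hn0 _
    have hYinv : (n:ℝ)^(-(α * (permLength σ0 : ℝ))) = Y⁻¹ := by
      rw [hY, ← Real.rpow_neg hn0.le]
    have hMB : M = ((n:ℝ)^(p:ℕ) * |Wg σ0|) * Y := by
      have hBs : B σ0 = |Wg σ0| * (n:ℝ) ^ ((p:ℝ) + α * (permLength σ0 : ℝ)) := rfl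
      rw [hMeq, hBs, hY, Real.rpow_add hn0, ← Real.rpow_natCast (n:ℝ) p]
      ring
    rw [hYinv] at habs
    have hZ : (n:ℝ)^(p:ℕ) * |Wg σ0| = M * Y⁻¹ := by
      rw [hMB, mul_assoc, mul_inv_cancel₀ hYpos.ne', mul_one]
    rw [hZ] at habs
    by_cases hσ0 : σ0 = 1
    · have hL0 : permLength σ0 = 0 := by rw [hσ0]; exact permLength_one
      have hY1 : Y = 1 := by rw [hY, hL0]; simp
      rw [if_pos hσ0, hY1] at habs
      simp only [inv_one, mul_one] at habs
      linarith
    · rw [if_neg hσ0, zero_add] at habs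
      have hZnn : 0 ≤ M * Y⁻¹ := mul_nonneg hM0 (inv_nonneg.mpr hYpos.le)
      have hZ0 : M * Y⁻¹ ≤ 0 := by linarith
      have hM' : M * Y⁻¹ * Y ≤ 0 * Y := mul_le_mul_of_nonneg_right hZ0 hYpos.le
      rw [mul_assoc, inv_mul_cancel₀ hYpos.ne', mul_one, zero_mul] at hM'
      linarith
  -- conclude
  have h1 := hWgle σ
  have h2 : M * (n:ℝ)^(-((p:ℝ) + α * (permLength σ : ℝ))) ≤
      3 * (n:ℝ)^(-((p:ℝ) + α * (permLength σ : ℝ))) :=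
    mul_le_mul_of_nonneg_right hM3 (Real.rpow_nonneg hn0.le _)
  have h3 : -(p:ℝ) - (permLength σ : ℝ) * α = -((p:ℝ) + α * (permLength σ : ℝ)) := by ring
  rw [← hα, h3]
  exact le_trans h1 h2


/-- Asymptotic bound for the unitary Weingarten function. For `n ≥ p` the Weingarten
function `Wg(n, ·)` is characterized as the inverse, in the group algebra of `S_p`, of the
function `σ ↦ n^{#σ}`, i.e. `∑_τ n^{#(σ⁻¹τ)} Wg(n,τ) = δ_{σ,1}`. If `k ≥ 2` and `p^k ≤ n`,
then `|Wg(n,σ)| ≤ K n^{−p−|σ|(1−2/k)}` for a constant `K` depending only on `k`. -/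
theorem weingarten_bound (k : ℕ) (hk : 2 ≤ k) :
    ∃ K : ℝ, 0 < K ∧ ∀ (p n : ℕ), 0 < p → p ^ k ≤ n →
      ∀ Wg : Equiv.Perm (Fin p) → ℝ,
        (∀ σ : Equiv.Perm (Fin p),
          ∑ τ : Equiv.Perm (Fin p), (n : ℝ) ^ cycleCount (σ⁻¹ * τ) * Wg τ =
            if σ = 1 then 1 else 0) →
        ∀ σ : Equiv.Perm (Fin p),
          |Wg σ| ≤ K * (n : ℝ) ^ (-(p : ℝ) - (permLength σ : ℝ) * (1 - 2 / (k : ℝ))) := by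
  exact ⟨3, by norm_num, fun p n hp hpk Wg hWg σ =>
    weingarten_bound_aux k hk p n hp hpk Wg hWg σ⟩
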